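/- arXiv:2302.03243 — 4 statements merged into one kernel-verified Lean document; each statement's English description precedes it below -/
import Mathlib

section
/- Let Γ be an (n+3)-arc in projective (n+1)-space and H a hyperplane disjoint from Γ. For any subset S of Γ of size t+1 (2 ≤ t+1 ≤ n+2), the span of S has projective dimension t, and its intersection with H, which contains all points (i,j) for i,j ∈ S, is a subspace of projective dimension t-1 spanned by these points (i,j). -/
open scoped LinearAlgebra.Projectivization
open Projectivization
open Module Submodule

/-- The linear span of a set of points of a projective space, as a submodule
of the underlying vector space. -/
noncomputable def pspan (K : Type*) {V : Type*} [DivisionRing K] [AddCommGroup V] [Module K V]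
    (s : Set (ℙ K V)) : Submodule K V :=
  ⨆ P ∈ s, Projectivization.submodule P

lemma pspan_image {K V ι : Type*} [DivisionRing K] [AddCommGroup V] [Module K V]
    (Γ : ι → ℙ K V) (s : Set ι) :
    pspan K (Γ '' s) = ⨆ k ∈ s, (Γ k).submodule := by
  rw [pspan, iSup_image]

lemma pspan_mono {K V : Type*} [DivisionRing K] [AddCommGroup V] [Module K V]
    {s t : Set (ℙ K V)} (h : s ⊆ t) : pspan K s ≤ pspan K t :=
  iSup_le fun P => iSup_le fun hP => le_iSup₂ (f := fun P _ => P.submodule) P (h hP)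

lemma pspan_eq_span {K V ι : Type*} [DivisionRing K] [AddCommGroup V] [Module K V]
    (Γ : ι → ℙ K V) (s : Set ι) :
    pspan K (Γ '' s) = Submodule.span K ((fun k => (Γ k).rep) '' s) := by
  rw [pspan_image]
  rw [show ((fun k => (Γ k).rep) '' s) = ⋃ k ∈ s, {(Γ k).rep} by
    ext x; simp [eq_comm]]
  rw [Submodule.span_iUnion]
  refine iSup_congr fun k => ?_
  rw [Submodule.span_iUnion]
  exact iSup_congr fun hk => Projectivization.submodule_eq _

lemma pspan_pair {K V : Type*} [DivisionRing K] [AddCommGroup V] [Module K V]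
    (P Q : ℙ K V) : pspan K {P, Q} = Submodule.span K {P.rep, Q.rep} := by
  have h : ({P, Q} : Set (ℙ K V)) = id '' {P, Q} := by simp
  rw [h, pspan_eq_span]
  congr 1
  exact Set.image_pair _ _ _


/-- Let `Γ` be an `(n+3)`-arc in projective `(n+1)`-space and `H` a hyperplane
disjoint from `Γ`.  For any subset `S` of the arc of size `t+1`
(`2 ≤ t+1 ≤ n+2`), the span of `S` has projective dimension `t` (vector rank
`t+1`), and its intersection with `H` is a subspace of projective dimension
`t-1` (vector rank `t`) spanned by the trace points `pt i j`, `i, j ∈ S`. -/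
theorem arc_subset_section {K : Type*} [Field K] {n : ℕ}
    (Γ : Fin (n+3) → ℙ K (Fin (n+2) → K))
    (H : Submodule K (Fin (n+2) → K))
    (pt : Fin (n+3) → Fin (n+3) → ℙ K (Fin (n+2) → K))
    (hΓ : ∀ S : Finset (Fin (n+3)), S.card = n + 2 → pspan K (Γ '' ↑S) = ⊤)
    (hH : Module.finrank K H = n + 1)
    (hdisj : ∀ k : Fin (n+3), ¬ (Γ k).submodule ≤ H)
    (hpt : ∀ i j : Fin (n+3), i ≠ j →
      (pt i j).submodule ≤ pspan K {Γ i, Γ j} ∧ (pt i j).submodule ≤ H)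
    (hsymm : ∀ i j : Fin (n+3), pt i j = pt j i) :
    ∀ S : Finset (Fin (n+3)), 2 ≤ S.card → S.card ≤ n + 2 →
      Module.finrank K ↥(pspan K (Γ '' ↑S)) = S.card ∧
      pspan K (Γ '' ↑S) ⊓ H
        = (⨆ i ∈ S, ⨆ j ∈ S, ⨆ _ : i ≠ j, (pt i j).submodule) ∧
      Module.finrank K ↥(pspan K (Γ '' ↑S) ⊓ H) = S.card - 1 := by
  intro S h2 hle
  set v : Fin (n+3) → (Fin (n+2) → K) := fun k => (Γ k).rep with hv
  set W := pspan K (Γ '' ↑S) with hW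
  set P := (⨆ i ∈ S, ⨆ j ∈ S, ⨆ _ : i ≠ j, (pt i j).submodule) with hP
  -- Step B : linear independence of v on S
  obtain ⟨T, hST, hTcard⟩ := Finset.exists_superset_card_eq hle (by simp [Fintype.card_fin])
  have hTtop : pspan K (Γ '' ↑T) = ⊤ := hΓ T hTcard
  have hfr : Module.finrank K (Fin (n+2) → K) = n + 2 := by
    simp [Module.finrank_fintype_fun_eq_card]
  have hindT : LinearIndependent K (fun k : ↥T => v k) := by
    apply linearIndependent_of_top_le_span_of_card_eq_finrank
    · rw [show (Set.range fun k : ↥T => v k) = (fun k => (Γ k).rep) '' ↑T from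
        (Set.image_eq_range _ _).symm, ← pspan_eq_span, hTtop]
    · simp [hTcard, hfr]
  have hindS : LinearIndependent K (fun k : ↥S => v k) := by
    have : (fun k : ↥S => v k) =
        (fun k : ↥T => v k) ∘ (fun k : ↥S => (⟨k.1, hST k.2⟩ : ↥T)) := rfl
    rw [this]
    refine hindT.comp _ (fun a b hab => ?_)
    have : (⟨a.1, hST a.2⟩ : ↥T).1 = (⟨b.1, hST b.2⟩ : ↥T).1 := congrArg Subtype.val hab
    exact Subtype.ext this
  -- Step C : finrank W = S.card
  have hrkW : Module.finrank K W = S.card := by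
    have hc := finrank_span_eq_card hindS
    rw [hW, pspan_eq_span, show ((fun k => (Γ k).rep) '' ↑S)
      = Set.range (fun k : ↥S => v k) from Set.image_eq_range _ _, hc, Fintype.card_coe]
  -- W not ≤ H
  obtain ⟨i0, hi0⟩ : ∃ i, i ∈ S := (Finset.card_pos (s := S)).mp (by omega)
  have hsubW : ∀ k ∈ S, (Γ k).submodule ≤ W := by
    intro k hk
    rw [hW, pspan_image]
    exact le_iSup₂ (f := fun k _ => (Γ k).submodule) k hk
  have hWH : ¬ W ≤ H := fun h => hdisj i0 ((hsubW i0 hi0).trans h)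
  -- finrank (W ⊓ H) = S.card - 1
  have hrkInf : Module.finrank K ↥(W ⊓ H) = S.card - 1 := by
    have hlt : W ⊓ H < W := lt_of_le_of_ne inf_le_left (fun h => hWH (h ▸ inf_le_right))
    have h1 : Module.finrank K ↥(W ⊓ H) < S.card := hrkW ▸ Submodule.finrank_lt_finrank_of_lt hlt
    have h2 : Module.finrank K ↥(W ⊔ H) + Module.finrank K ↥(W ⊓ H)
        = Module.finrank K W + Module.finrank K H := Submodule.finrank_sup_add_finrank_inf_eq W H
    have h3 : Module.finrank K ↥(W ⊔ H) ≤ n + 2 := by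
      simpa [hfr] using Submodule.finrank_le (W ⊔ H)
    omega
  -- P ≤ W ⊓ H
  have hPle : P ≤ W ⊓ H := by
    rw [hP]
    refine iSup₂_le fun i hi => iSup₂_le fun j hj => iSup_le fun hij => le_inf ?_ (hpt i j hij).2
    refine ((hpt i j hij).1.trans (pspan_mono ?_)).trans le_rfl
    rintro x (rfl | rfl)
    · exact ⟨i, hi, rfl⟩
    · exact ⟨j, hj, rfl⟩
  -- W ≤ P ⊔ (Γ i0).submodule
  have hkey : W ≤ P ⊔ (Γ i0).submodule := by
    rw [hW, pspan_image]
    refine iSup₂_le fun k hk => ?_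
    rcases eq_or_ne k i0 with rfl | hki0
    · exact le_sup_right
    · have hik : i0 ≠ k := Ne.symm hki0
      have hmem : (pt i0 k).rep ∈ Submodule.span K {v i0, v k} := by
        have := (hpt i0 k hik).1
        rw [pspan_pair] at this
        exact this (by rw [Projectivization.submodule_eq]; exact Submodule.mem_span_singleton_self _)
      obtain ⟨a, b, hab⟩ := Submodule.mem_span_pair.mp hmem
      have hbne : b ≠ 0 := by
        rintro rfl
        have hane : a ≠ 0 := by
          rintro rfl
          simp at hab
          exact (pt i0 k).rep_nonzero hab.symm
        apply hdisj i0
        rw [Projectivization.submodule_eq, Submodule.span_le, Set.singleton_subset_iff]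
        have hrep : (pt i0 k).rep ∈ H := (hpt i0 k hik).2
          (by rw [Projectivization.submodule_eq]; exact Submodule.mem_span_singleton_self _)
        have : v i0 = a⁻¹ • (pt i0 k).rep := by
          rw [← hab]; simp [smul_smul, inv_mul_cancel₀ hane]
        rw [show (Γ i0).rep = a⁻¹ • (pt i0 k).rep from this]
        exact H.smul_mem _ hrep
      rw [Projectivization.submodule_eq, Submodule.span_le, Set.singleton_subset_iff]
      have hPrep : (pt i0 k).rep ∈ P := by
        have : (pt i0 k).submodule ≤ P := by
          rw [hP]
          exact le_iSup_of_le i0 (le_iSup_of_le hi0 (le_iSup_of_le k (le_iSup_of_le hk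
            (le_iSup_of_le hik le_rfl))))
        exact this (by rw [Projectivization.submodule_eq]; exact Submodule.mem_span_singleton_self _)
      have hvk : v k = b⁻¹ • ((pt i0 k).rep - a • v i0) := by
        rw [← hab]; simp [smul_smul, inv_mul_cancel₀ hbne]
      rw [show (Γ k).rep = b⁻¹ • ((pt i0 k).rep - a • v i0) from hvk]
      refine Submodule.smul_mem _ _ (Submodule.sub_mem _ ?_ ?_)
      · exact Submodule.mem_sup_left hPrep
      · refine Submodule.smul_mem _ _ (Submodule.mem_sup_right ?_)
        rw [Projectivization.submodule_eq]
        exact Submodule.mem_span_singleton_self _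
  -- finrank P ≥ S.card - 1, conclude
  have hrkQ : S.card ≤ Module.finrank K P + 1 := by
    calc S.card = Module.finrank K W := hrkW.symm
    _ ≤ Module.finrank K ↥(P ⊔ (Γ i0).submodule) := Submodule.finrank_mono hkey
    _ ≤ Module.finrank K P + Module.finrank K (Γ i0).submodule :=
        Submodule.finrank_add_le_finrank_add_finrank _ _
    _ ≤ Module.finrank K P + 1 := by
        rw [(Γ i0).finrank_submodule]
  have hrkP : Module.finrank K P ≤ S.card - 1 := hrkInf ▸ Submodule.finrank_mono hPle
  have heq : P = W ⊓ H := Submodule.eq_of_le_of_finrank_eq hPle (by omega)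
  exact ⟨hrkW, heq.symm, hrkInf⟩
end

section
/- Let A = {A_3,...,A_{n+3}} and B = {B_3,...,B_{n+3}} be simplexes of projective n-space H in perspective from a point V, sharing no point, and such that V lies on no face of A or B. Embed H as a hyperplane of projective (n+1)-space. Then there exists an arc Γ = {1,2,...,n+3} of n+3 points in the (n+1)-space, none lying in H, such that V = line(1,2) ∩ H, A_i = line(1,i) ∩ H and B_i = line(2,i) ∩ H for all 3 ≤ i ≤ n+3. -/
open scoped LinearAlgebra.Projectivization
open Projectivization

open Module
section helpers
variable {K : Type*} [Field K] {W : Type*} [AddCommGroup W] [Module K W]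

lemma pspan_image_s13 {ι : Type*} (f : ι → ℙ K W) (g : ι → W)
    (hfg : ∀ i, (f i).submodule = Submodule.span K {g i}) (t : Set ι) :
    pspan K (f '' t) = Submodule.span K (g '' t) := by
  rw [pspan, iSup_image]
  simp_rw [hfg]
  rw [← Submodule.span_iUnion₂]
  congr 1
  ext x
  simp [Set.mem_image, eq_comm]

lemma pspan_pair_s13 (P Q : ℙ K W) :
    pspan K {P, Q} = P.submodule ⊔ Q.submodule := by
  rw [pspan, iSup_pair]

lemma span_singleton_neg (x : W) : Submodule.span K {-x} = Submodule.span K {x} := by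
  have := Submodule.span_neg (R := K) ({x} : Set W)
  simpa using this

lemma finrank_sup_singleton [FiniteDimensional K W] {M : Submodule K W} {x : W} (hx : x ∉ M) :
    finrank K ↥(M ⊔ Submodule.span K {x}) = finrank K M + 1 := by
  have hx0 : x ≠ 0 := fun h => hx (h ▸ M.zero_mem)
  have hle : finrank K ↥(M ⊔ Submodule.span K {x}) ≤ finrank K M + 1 := by
    have := Submodule.finrank_add_le_finrank_add_finrank M (Submodule.span K {x})
    rwa [finrank_span_singleton hx0] at this
  have hlt : finrank K M < finrank K ↥(M ⊔ Submodule.span K {x}) := by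
    apply Submodule.finrank_lt_finrank_of_lt
    refine lt_of_le_of_ne le_sup_left (fun h => hx ?_)
    rw [h]
    exact SetLike.le_def.mp le_sup_right (Submodule.mem_span_singleton_self x)
  omega

lemma line_trace {H : Submodule K W} {q b : W} (hq : q ∉ H) (hb : b ∈ H) (hb0 : b ≠ 0) :
    Submodule.span K {q, q - b} ⊓ H = Submodule.span K {b} := by
  apply le_antisymm
  · rintro x ⟨hx1, hx2⟩
    rw [SetLike.mem_coe, Submodule.mem_span_pair] at hx1
    obtain ⟨c, d, rfl⟩ := hx1
    have : (c + d) • q - d • b ∈ H := by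
      convert (show c • q + d • (q - b) ∈ H from hx2) using 1; module
    have hcd : c + d = 0 := by
      by_contra hcd
      apply hq
      have : (c + d) • q ∈ H := by
        have := H.add_mem this (H.smul_mem d hb); simpa using this
      have := H.smul_mem (c + d)⁻¹ this
      rwa [smul_smul, inv_mul_cancel₀ hcd, one_smul] at this
    rw [Submodule.mem_span_singleton]
    exact ⟨-d, by rw [show c • q + d • (q - b) = (c + d) • q - d • b by module, hcd]; module⟩
  · rw [Submodule.span_le, Set.singleton_subset_iff]
    refine ⟨?_, hb⟩
    have : b = q - (q - b) := by abel
    rw [this]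
    exact Submodule.sub_mem _ (Submodule.subset_span (by simp))
      (Submodule.subset_span (by simp))

end helpers

lemma le_pspan {K : Type*} [Field K] {W : Type*} [AddCommGroup W] [Module K W]
    {P : ℙ K W} {s : Set (ℙ K W)} (h : P ∈ s) : P.submodule ≤ pspan K s :=
  le_iSup₂ (f := fun P _ => Projectivization.submodule P) P h


/-- Two simplexes `A`, `B` of a projective `n`-space `H` (embedded as a
hyperplane of projective `(n+1)`-space), in perspective from a point `V`,
sharing no point, with `V` on no face of `A` or `B`, arise from an arc of
`n+3` points of the `(n+1)`-space, none lying in `H`: `V` is the trace of the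
line through arc points `0,1` on `H`, `A i` the trace of the line through `0`
and `i+2`, and `B i` the trace of the line through `1` and `i+2`. -/
theorem perspective_simplexes_from_arc {K : Type*} [Field K] {n : ℕ}
    (H : Submodule K (Fin (n+2) → K)) (hH : Module.finrank K H = n + 1)
    (A B : Fin (n+1) → ℙ K (Fin (n+2) → K)) (V : ℙ K (Fin (n+2) → K))
    -- the simplexes and the vertex lie in the hyperplane `H`
    (hAH : ∀ i, (A i).submodule ≤ H) (hBH : ∀ i, (B i).submodule ≤ H)
    (hVH : V.submodule ≤ H)
    -- `A` and `B` are simplexes of `H`: their `n+1` points span `H`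
    (hA : pspan K (Set.range A) = H) (hB : pspan K (Set.range B) = H)
    -- in perspective from `V`
    (hV : ∀ i : Fin (n+1), V.submodule ≤ pspan K {A i, B i})
    -- no common point
    (hpt : ∀ i j : Fin (n+1), A i ≠ B j)
    -- `V` lies on no face of `A` or of `B`
    (hVface : ∀ i : Fin (n+1),
      ¬ V.submodule ≤ pspan K (A '' {k | k ≠ i}) ∧
      ¬ V.submodule ≤ pspan K (B '' {k | k ≠ i})) :
    ∃ Γ : Fin (n+3) → ℙ K (Fin (n+2) → K),
      -- `Γ` is an arc: every `(n+2)`-subset spans the `(n+1)`-space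
      (∀ S : Finset (Fin (n+3)), S.card = n + 2 → pspan K (Γ '' ↑S) = ⊤) ∧
      -- no point of `Γ` lies in `H`
      (∀ k : Fin (n+3), ¬ (Γ k).submodule ≤ H) ∧
      -- `V`, `A i`, `B i` are the traces of the appropriate lines on `H`
      V.submodule = pspan K {Γ 0, Γ 1} ⊓ H ∧
      (∀ i : Fin (n+1), (A i).submodule = pspan K {Γ 0, Γ i.succ.succ} ⊓ H) ∧
      (∀ i : Fin (n+1), (B i).submodule = pspan K {Γ 1, Γ i.succ.succ} ⊓ H) := by
  classical
  have hamb : finrank K (Fin (n+2) → K) = n + 2 := Module.finrank_fin_fun K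
  -- `Fin (n+1)` has at least two elements (else `A 0 = B 0`)
  have hex : ∀ i : Fin (n+1), ∃ j : Fin (n+1), j ≠ i := by
    intro i
    rcases Nat.eq_zero_or_pos n with hn | hn
    · exfalso
      subst hn
      have hss : ∀ j : Fin (0+1), j = i := fun j => Fin.ext (by omega)
      have hA' : (A i).submodule = H := by
        refine le_antisymm (hAH i) ?_
        rw [← hA]
        refine iSup₂_le fun P hP => ?_
        obtain ⟨j, rfl⟩ := hP
        rw [hss j]
      have hB' : (B i).submodule = H := by
        refine le_antisymm (hBH i) ?_
        rw [← hB]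
        refine iSup₂_le fun P hP => ?_
        obtain ⟨j, rfl⟩ := hP
        rw [hss j]
      exact hpt i i (submodule_injective (hA'.trans hB'.symm))
    · have h2 : Nontrivial (Fin (n+1)) := Fin.nontrivial_iff_two_le.mpr (by omega)
      exact exists_ne i
  -- pick `p ∉ H`
  have hHne : H ≠ ⊤ := by
    intro h
    rw [h, finrank_top, hamb] at hH
    omega
  obtain ⟨p, hp⟩ : ∃ p, p ∉ H := by
    by_contra h
    push_neg at h
    exact hHne (Submodule.eq_top_iff'.mpr h)
  -- representatives and scaling
  have key : ∀ i, ∃ c d : K, c • (A i).rep + d • (B i).rep = V.rep := by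
    intro i
    apply Submodule.mem_span_pair.mp
    have := hV i
    rw [pspan_pair_s13, submodule_eq, submodule_eq, submodule_eq,
      Submodule.span_singleton_le_iff_mem] at this
    rwa [show ({(A i).rep, (B i).rep} : Set _) = insert (A i).rep {(B i).rep} from rfl,
      Submodule.span_insert]
  choose c d hcd using key
  have hv0 : V.rep ≠ 0 := V.rep_nonzero
  have hc0 : ∀ i, c i ≠ 0 := by
    intro i hci
    obtain ⟨j, hj⟩ := hex i
    apply (hVface j).2
    have hd0 : d i ≠ 0 := by
      intro hdi
      have h := hcd i
      rw [hci, hdi, zero_smul, zero_smul, add_zero] at h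
      exact hv0 h.symm
    have : V.submodule = (B i).submodule := by
      rw [submodule_eq, submodule_eq, ← hcd i, hci, zero_smul, zero_add,
        Submodule.span_singleton_smul_eq (hd0.isUnit) _]
    rw [this]
    exact le_pspan (Set.mem_image_of_mem B (Ne.symm hj))
  have hd0 : ∀ i, d i ≠ 0 := by
    intro i hdi
    obtain ⟨j, hj⟩ := hex i
    apply (hVface j).1
    have : V.submodule = (A i).submodule := by
      rw [submodule_eq, submodule_eq, ← hcd i, hdi, zero_smul, add_zero,
        Submodule.span_singleton_smul_eq ((hc0 i).isUnit) _]
    rw [this]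
    exact le_pspan (Set.mem_image_of_mem A (Ne.symm hj))
  set v : Fin (n+2) → K := V.rep with hv_def
  set a : Fin (n+1) → (Fin (n+2) → K) := fun i => c i • (A i).rep with ha_def
  set b : Fin (n+1) → (Fin (n+2) → K) := fun i => d i • (B i).rep with hb_def
  have hab : ∀ i, a i + b i = v := hcd
  have ha_sub : ∀ i, (A i).submodule = Submodule.span K {a i} := fun i => by
    rw [submodule_eq, ha_def]
    exact (Submodule.span_singleton_smul_eq ((hc0 i).isUnit) _).symm
  have hb_sub : ∀ i, (B i).submodule = Submodule.span K {b i} := fun i => by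
    rw [submodule_eq, hb_def]
    exact (Submodule.span_singleton_smul_eq ((hd0 i).isUnit) _).symm
  have hv_sub : V.submodule = Submodule.span K {v} := submodule_eq V
  have ha0 : ∀ i, a i ≠ 0 := fun i => smul_ne_zero (hc0 i) (A i).rep_nonzero
  have hb0 : ∀ i, b i ≠ 0 := fun i => smul_ne_zero (hd0 i) (B i).rep_nonzero
  have haH : ∀ i, a i ∈ H := fun i =>
    (ha_sub i ▸ hAH i) (Submodule.mem_span_singleton_self _)
  have hbH : ∀ i, b i ∈ H := fun i =>
    (hb_sub i ▸ hBH i) (Submodule.mem_span_singleton_self _)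
  have hvH : v ∈ H := (hv_sub ▸ hVH) (Submodule.mem_span_singleton_self _)
  have hAspan : Submodule.span K (Set.range a) = H := by
    rw [← Set.image_univ, ← pspan_image_s13 A a ha_sub, Set.image_univ, hA]
  have hBspan : Submodule.span K (Set.range b) = H := by
    rw [← Set.image_univ, ← pspan_image_s13 B b hb_sub, Set.image_univ, hB]
  have hva : ∀ i, v ∉ Submodule.span K (a '' {k | k ≠ i}) := by
    intro i hvm
    exact (hVface i).1 (by
      rw [pspan_image_s13 A a ha_sub, hv_sub, Submodule.span_singleton_le_iff_mem]
      exact hvm)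
  -- the ten points upstairs
  set w : Fin (n+3) → (Fin (n+2) → K) :=
    Fin.cases p (Fin.cases (p - v) (fun i => p - a i)) with hw_def
  have hw0 : w 0 = p := rfl
  have hw1 : w 1 = p - v := by
    rw [show (1 : Fin (n+3)) = Fin.succ 0 from (Fin.succ_zero_eq_one).symm]
    simp only [hw_def]
    rw [Fin.cases_succ, Fin.cases_zero]
  have hw2 : ∀ i : Fin (n+1), w i.succ.succ = p - a i := by
    intro i
    simp only [hw_def]
    rw [Fin.cases_succ, Fin.cases_succ]
  have hwH : ∀ k, w k ∉ H := by
    intro k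
    induction k using Fin.cases with
    | zero => exact hp
    | succ k =>
      induction k using Fin.cases with
      | zero =>
        rw [show (Fin.succ 0 : Fin (n+3)) = 1 from Fin.succ_zero_eq_one, hw1]
        intro h
        exact hp (by simpa using H.add_mem h hvH)
      | succ i =>
        rw [hw2]
        intro h
        exact hp (by simpa using H.add_mem h (haH i))
  have hwne : ∀ k, w k ≠ 0 := fun k h => hwH k (h ▸ H.zero_mem)
  refine ⟨fun k => mk K (w k) (hwne k), ?_, ?_, ?_, ?_, ?_⟩
  · -- arc condition
    intro S hS
    obtain ⟨k, hk⟩ : ∃ k, k ∉ S := by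
      by_contra h
      push_neg at h
      have : S = Finset.univ := Finset.eq_univ_iff_forall.mpr h
      rw [this, Finset.card_univ, Fintype.card_fin] at hS
      omega
    have hSeq : S = {k}ᶜ := by
      apply Finset.eq_of_subset_of_card_le
      · intro j hj
        simp only [Finset.mem_compl, Finset.mem_singleton]
        rintro rfl; exact hk hj
      · rw [Finset.card_compl, Finset.card_singleton, Fintype.card_fin, hS]
        omega
    rw [hSeq, pspan_image_s13 _ w (fun k => submodule_mk (w k) (hwne k))]
    clear hSeq hk hS
    have hmem : ∀ (k j : Fin (n+3)), j ≠ k →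
        w j ∈ Submodule.span K (w '' ↑({k}ᶜ : Finset (Fin (n+3)))) :=
      fun k j hj => Submodule.subset_span ⟨j, by simp [hj], rfl⟩
    have htop : ∀ (N : Submodule K (Fin (n+2) → K)) (x : Fin (n+2) → K),
        x ∉ H → H ≤ N → x ∈ N → N = ⊤ := by
      intro N x hx hHN hxN
      have h1 : H ⊔ Submodule.span K {x} = ⊤ := by
        apply Submodule.eq_top_of_finrank_eq
        rw [finrank_sup_singleton hx, hH, hamb]
      rw [eq_top_iff, ← h1]
      exact sup_le hHN ((Submodule.span_singleton_le_iff_mem _ _).mpr hxN)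
    induction k using Fin.cases with
    | zero =>
      have hpv : p - v ∈ _ := hw1 ▸ hmem 0 1 one_ne_zero
      have hbn : ∀ i, b i ∈ Submodule.span K (w '' ↑({(0 : Fin (n+3))}ᶜ : Finset _)) := by
        intro i
        have h2 := hw2 i ▸ hmem 0 i.succ.succ (Fin.succ_ne_zero _)
        have h3 : b i = (p - a i) - (p - v) := by rw [← hab i]; abel
        rw [h3]
        exact Submodule.sub_mem _ h2 hpv
      refine htop _ (p - v) (hw1 ▸ hwH 1) ?_ hpv
      rw [← hBspan, Submodule.span_le]
      rintro x ⟨i, rfl⟩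
      exact hbn i
    | succ k =>
      induction k using Fin.cases with
      | zero =>
        have hpn : p ∈ _ := hw0 ▸ hmem (Fin.succ 0) 0 (Fin.succ_ne_zero 0).symm
        have han : ∀ i, a i ∈ Submodule.span K
            (w '' ↑({(Fin.succ 0 : Fin (n+3))}ᶜ : Finset _)) := by
          intro i
          have h2 := hw2 i ▸ hmem (Fin.succ 0) i.succ.succ
            (fun h => Fin.succ_ne_zero i (Fin.succ_injective _ h))
          have h3 : a i = p - (p - a i) := by abel
          rw [h3]
          exact Submodule.sub_mem _ hpn h2
        refine htop _ p hp ?_ hpn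
        rw [← hAspan, Submodule.span_le]
        rintro x ⟨i, rfl⟩
        exact han i
      | succ j =>
        have hpn : p ∈ _ := hw0 ▸ hmem j.succ.succ 0 (Fin.succ_ne_zero _).symm
        have hpvn : p - v ∈ _ := hw1 ▸ hmem j.succ.succ 1
          (by
            rw [← Fin.succ_zero_eq_one]
            exact fun h => Fin.succ_ne_zero j (Fin.succ_injective _ h).symm)
        have hvn : v ∈ Submodule.span K (w '' ↑({j.succ.succ}ᶜ : Finset (Fin (n+3)))) := by
          have h3 : v = p - (p - v) := by abel
          rw [h3]
          exact Submodule.sub_mem _ hpn hpvn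
        have han : ∀ i, i ≠ j → a i ∈ Submodule.span K
            (w '' ↑({j.succ.succ}ᶜ : Finset (Fin (n+3)))) := by
          intro i hij
          have h2 := hw2 i ▸ hmem j.succ.succ i.succ.succ
            (fun h => hij (Fin.succ_injective _ (Fin.succ_injective _ h)))
          have h3 : a i = p - (p - a i) := by abel
          rw [h3]
          exact Submodule.sub_mem _ hpn h2
        set M : Submodule K (Fin (n+2) → K) := Submodule.span K (a '' {k | k ≠ j}) with hM
        have hMH : M ⊔ Submodule.span K {a j} = H := by
          rw [hM, ← Submodule.span_union, ← Set.image_singleton, ← Set.image_union]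
          have huniv : ({k | k ≠ j} ∪ {j} : Set (Fin (n+1))) = Set.univ :=
            Set.eq_univ_iff_forall.mpr fun x => (ne_or_eq x j).imp id id
          rw [huniv, Set.image_univ, hAspan]
        have haj : a j ∉ M := by
          intro h
          have : M = H := by
            rw [← hMH]
            exact (sup_eq_left.mpr ((Submodule.span_singleton_le_iff_mem _ _).mpr h)).symm
          apply hva j
          rw [← hM, this]
          exact hvH
        have hMv : M ⊔ Submodule.span K {v} = H := by
          apply Submodule.eq_of_le_of_finrank_eq
          · refine sup_le ?_ ((Submodule.span_singleton_le_iff_mem _ _).mpr hvH)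
            rw [hM, Submodule.span_le]
            rintro x ⟨i, _, rfl⟩
            exact haH i
          · rw [finrank_sup_singleton (hva j), ← hMH, finrank_sup_singleton haj]
        refine htop _ p hp ?_ hpn
        rw [← hMv]
        refine sup_le ?_ ((Submodule.span_singleton_le_iff_mem _ _).mpr hvn)
        rw [hM, Submodule.span_le]
        rintro x ⟨i, hij, rfl⟩
        exact han i hij
  · intro k
    rw [submodule_mk, Submodule.span_singleton_le_iff_mem]
    exact hwH k
  · rw [pspan_pair_s13, submodule_mk, submodule_mk, hw0, hw1, ← Submodule.span_insert,
      show insert p ({p - v} : Set _) = {p, p - v} from rfl, line_trace hp hvH hv0, hv_sub]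
  · intro i
    rw [pspan_pair_s13, submodule_mk, submodule_mk, hw0, hw2, ← Submodule.span_insert,
      show insert p ({p - a i} : Set _) = {p, p - a i} from rfl,
      line_trace hp (haH i) (ha0 i), ha_sub]
  · intro i
    have hbi : a i - v = -(b i) := by rw [← hab i]; abel
    have hKb : Submodule.span K {a i - v} = Submodule.span K {b i} := by
      rw [hbi, span_singleton_neg]
    have hpv : p - v ∉ H := hw1 ▸ hwH 1
    have hne : a i - v ≠ 0 := by rw [hbi]; exact neg_ne_zero.mpr (hb0 i)
    rw [pspan_pair_s13, submodule_mk, submodule_mk, hw1, hw2, ← Submodule.span_insert,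
      show insert (p - v) ({p - a i} : Set _) = {p - v, p - a i} from rfl,
      show p - a i = (p - v) - (a i - v) by abel,
      line_trace hpv (H.sub_mem (haH i) hvH) hne, hKb, hb_sub]
end

section
/- Let A, B be two simplexes in projective n-space with no common point and no common face, in perspective from a point. Then A, B are in perspective from a hyperplane: there is a hyperplane v such that for each t = 1,...,n-1, the intersection of corresponding t-spaces of A and B is a (t-1)-space lying in v. -/
open scoped LinearAlgebra.Projectivization
open Projectivization

open Module Submodule

section Helpers

variable {K : Type*} [Field K] {E : Type*} [AddCommGroup E] [Module K E]

lemma span_image_eq_biSup {ι : Type*} (g : ι → E) (s : Set ι) :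
    span K (g '' s) = ⨆ i ∈ s, K ∙ g i := by
  apply le_antisymm
  · rw [span_le]
    rintro x ⟨i, hi, rfl⟩
    exact Submodule.mem_iSup_of_mem i (Submodule.mem_iSup_of_mem hi (mem_span_singleton_self _))
  · exact iSup₂_le fun i hi => span_le.2 (Set.singleton_subset_iff.2 (subset_span ⟨i, hi, rfl⟩))

lemma pspan_image_s14 {ι : Type*} (P : ι → ℙ K E) (s : Set ι) :
    pspan K (P '' s) = span K ((fun i => (P i).rep) '' s) := by
  rw [pspan, iSup_image, span_image_eq_biSup]
  simp only [Projectivization.submodule_eq]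

lemma span_smul_image {ι : Type*} (f : ι → E) (c : ι → K) (hc : ∀ i, c i ≠ 0) (s : Set ι) :
    span K ((fun i => c i • f i) '' s) = span K (f '' s) := by
  apply le_antisymm <;> rw [span_le] <;> rintro x ⟨i, hi, rfl⟩
  · exact smul_mem _ _ (subset_span ⟨i, hi, rfl⟩)
  · have : f i = (c i)⁻¹ • (c i • f i) := by rw [inv_smul_smul₀ (hc i)]
    rw [this]
    exact smul_mem _ _ (subset_span ⟨i, hi, rfl⟩)

lemma indep_two {ι : Type*} {f : ι → E} (hf : LinearIndependent K f) {j k : ι} (hjk : j ≠ k)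
    {c d : K} (h : c • f j + d • f k = 0) : c = 0 ∧ d = 0 := by
  have h0 : Finsupp.linearCombination K f (Finsupp.single j c + Finsupp.single k d) = 0 := by
    simp [h]
  have := linearIndependent_iff.1 hf _ h0
  constructor
  · have := congrArg (fun l => l j) this
    simpa [Finsupp.single_apply, hjk.symm] using this
  · have := congrArg (fun l => l k) this
    simpa [Finsupp.single_apply, hjk] using this

lemma finrank_span_image_finset {ι : Type*} [Fintype ι] {f : ι → E} [DecidableEq ι]
    (hf : LinearIndependent K f) (s : Finset ι) :
    finrank K ↥(span K (f '' ↑s)) = s.card := by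
  rw [Set.image_eq_range]
  have h := hf.comp (Subtype.val : ↥(↑s : Set ι) → ι) Subtype.val_injective
  rw [show (Set.range fun x : ↥(↑s : Set ι) => f ↑x) = Set.range (f ∘ Subtype.val) from rfl,
    finrank_span_eq_card h]
  simp

lemma finrank_inf_eq [FiniteDimensional K E] {U W : Submodule K E} {x : E} {t : ℕ}
    (hxW : x ∈ W) (hxU : x ∉ U) (hWle : W ≤ U ⊔ (K ∙ x))
    (hU : finrank K U = t + 1) (hW : finrank K W = t + 1) :
    finrank K ↥(U ⊓ W) = t := by
  have hx0 : x ≠ 0 := fun h => hxU (h ▸ U.zero_mem)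
  have hsup : U ⊔ W = U ⊔ (K ∙ x) := by
    refine le_antisymm (sup_le le_sup_left hWle) (sup_le_sup_left ?_ U)
    rwa [span_le, Set.singleton_subset_iff]
  have hinf : U ⊓ (K ∙ x) = ⊥ := by
    rw [eq_bot_iff]
    rintro y ⟨hyU, hyx⟩
    rw [SetLike.mem_coe, mem_span_singleton] at hyx
    obtain ⟨c, rfl⟩ := hyx
    rcases eq_or_ne c 0 with rfl | hc
    · simp
    · have h2 := U.smul_mem c⁻¹ hyU
      rw [inv_smul_smul₀ hc] at h2
      exact absurd h2 hxU
  have h1 := Submodule.finrank_sup_add_finrank_inf_eq U (K ∙ x)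
  have h2 := Submodule.finrank_sup_add_finrank_inf_eq U W
  rw [hinf, finrank_bot, finrank_span_singleton hx0, hU] at h1
  rw [hsup, hU, hW] at h2
  omega

lemma key_deg {n : ℕ} [FiniteDimensional K E] (hdim : finrank K E = n + 1)
    (a b : Fin (n+1) → E) (i0 : Fin (n+1))
    (ha : LinearIndependent K a) (hb : LinearIndependent K b)
    (hrel : ∀ k, k ≠ i0 → a k + b k = a i0)
    (hface : ∀ j, span K (a '' {k | k ≠ j}) ≠ span K (b '' {k | k ≠ j})) :
    ∃ v : Submodule K E, finrank K v = n ∧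
      ∀ S : Finset (Fin (n+1)), 1 ≤ S.card → S.card ≤ n →
        finrank K ↥(span K (a '' ↑S) ⊓ span K (b '' ↑S)) = S.card - 1 ∧
        span K (a '' ↑S) ⊓ span K (b '' ↑S) ≤ v := by
  classical
  have hfaceset : ∀ j : Fin (n+1), {k | k ≠ j} = ↑(Finset.univ.erase j) := by
    intro j; ext k; simp
  have hfrank : ∀ (f : Fin (n+1) → E), LinearIndependent K f → ∀ j,
      finrank K ↥(span K (f '' {k | k ≠ j})) = n := by
    intro f hf j
    rw [hfaceset j, finrank_span_image_finset hf,
      Finset.card_erase_of_mem (Finset.mem_univ _)]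
    simp
  have hbk : ∀ k, k ≠ i0 → b k = a i0 - a k := by
    intro k hk; rw [eq_sub_iff_add_eq, add_comm]; exact hrel k hk
  -- the crucial fact : b i0 is not in the span of ≤ n of the a's whose index set contains i0
  have hkey : ∀ S : Finset (Fin (n+1)), i0 ∈ S → S.card ≤ n → b i0 ∉ span K (a '' ↑S) := by
    intro S hi0S hcard hmem
    obtain ⟨j, hj⟩ : ∃ j, j ∉ S := by
      by_contra h; push_neg at h
      rw [Finset.eq_univ_iff_forall.2 h, Finset.card_univ, Fintype.card_fin] at hcard
      omega
    have hji0 : i0 ≠ j := fun h => hj (h ▸ hi0S)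
    have hSsub : (↑S : Set (Fin (n+1))) ⊆ {k | k ≠ j} := fun k hk hkj => hj (hkj ▸ hk)
    have hle : span K (b '' {k | k ≠ j}) ≤ span K (a '' {k | k ≠ j}) := by
      rw [span_le]
      rintro x ⟨k, (hk : k ≠ j), rfl⟩
      rcases eq_or_ne k i0 with rfl | hki0
      · exact span_mono (Set.image_mono hSsub) hmem
      · rw [hbk k hki0]
        exact sub_mem (subset_span ⟨i0, hji0, rfl⟩) (subset_span ⟨k, hk, rfl⟩)
    have heq := Submodule.eq_of_le_of_finrank_le hle
      (le_of_eq ((hfrank a ha j).trans (hfrank b hb j).symm))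
    exact hface j heq.symm
  refine ⟨span K (b '' {k | k ≠ i0}), hfrank b hb i0, ?_⟩
  intro S h1 hn
  set U := span K (a '' ↑S) with hU
  set W := span K (b '' ↑S) with hW
  have hUr : finrank K ↥U = S.card := finrank_span_image_finset ha S
  have hWr : finrank K ↥W = S.card := finrank_span_image_finset hb S
  have hcard : S.card - 1 + 1 = S.card := by omega
  by_cases hi0 : i0 ∈ S
  · -- degenerate index inside S
    have hxU : b i0 ∉ U := hkey S hi0 hn
    have hxW : b i0 ∈ W := subset_span ⟨i0, hi0, rfl⟩
    have hWle : W ≤ U ⊔ (K ∙ b i0) := by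
      rw [hW, span_le]
      rintro x ⟨k, hk, rfl⟩
      rcases eq_or_ne k i0 with rfl | hki0
      · exact mem_sup_right (mem_span_singleton_self _)
      · rw [hbk k hki0]
        exact mem_sup_left (sub_mem (subset_span ⟨i0, hi0, rfl⟩) (subset_span ⟨k, hk, rfl⟩))
    refine ⟨finrank_inf_eq hxW hxU hWle (by omega) (by omega), ?_⟩
    -- inclusion in the hyperplane
    rintro x ⟨hxU', hxW'⟩
    rw [hW, SetLike.mem_coe, Finsupp.mem_span_image_iff_linearCombination] at hxW'
    obtain ⟨m, hmsupp, rfl⟩ := hxW'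
    rw [Finsupp.mem_supported] at hmsupp
    have hsum : Finsupp.linearCombination K b m = ∑ k ∈ S, m k • b k := by
      rw [Finsupp.linearCombination_apply, Finsupp.sum]
      exact Finset.sum_subset hmsupp (fun k _ hk => by
        rw [Finsupp.notMem_support_iff.1 hk, zero_smul])
    have hsplit : Finsupp.linearCombination K b m
        = m i0 • b i0 + ∑ k ∈ S.erase i0, m k • b k := by
      rw [hsum, ← Finset.add_sum_erase _ _ hi0]
    have herase : ∀ k ∈ S.erase i0, m k • b k ∈ U := by
      intro k hk
      obtain ⟨hki0, hkS⟩ := Finset.mem_erase.1 hk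
      rw [hbk k hki0]
      exact smul_mem _ _ (sub_mem (subset_span ⟨i0, hi0, rfl⟩) (subset_span ⟨k, hkS, rfl⟩))
    have hm0 : m i0 = 0 := by
      by_contra hm0
      apply hxU
      have : m i0 • b i0 = Finsupp.linearCombination K b m - ∑ k ∈ S.erase i0, m k • b k := by
        rw [hsplit]; abel
      have hmem : m i0 • b i0 ∈ U := by
        rw [this]
        exact sub_mem hxU' (Submodule.sum_mem _ herase)
      have := smul_mem U (m i0)⁻¹ hmem
      rwa [inv_smul_smul₀ hm0] at this
    rw [hsplit, hm0, zero_smul, zero_add]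
    refine Submodule.sum_mem _ fun k hk => ?_
    exact smul_mem _ _ (subset_span ⟨k, (Finset.mem_erase.1 hk).1, rfl⟩)
  · -- i0 outside S
    obtain ⟨i1, hi1⟩ := Finset.card_pos.1 (by omega : 0 < S.card)
    have hai0 : a i0 ∉ U := by
      have := ha.notMem_span_image (s := (↑S : Set (Fin (n+1)))) (by simpa using hi0)
      exact this
    have hi1i0 : i1 ≠ i0 := fun h => hi0 (h ▸ hi1)
    have hxW : b i1 ∈ W := subset_span ⟨i1, hi1, rfl⟩
    have hxU : b i1 ∉ U := by
      intro hmem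
      apply hai0
      have : a i0 = b i1 + a i1 := by rw [hbk i1 hi1i0]; abel
      rw [this]
      exact add_mem hmem (subset_span ⟨i1, hi1, rfl⟩)
    have hWle : W ≤ U ⊔ (K ∙ b i1) := by
      rw [hW, span_le]
      rintro x ⟨k, hk, rfl⟩
      have hki0 : k ≠ i0 := fun h => hi0 (h ▸ hk)
      have : b k = (a i1 - a k) + b i1 := by
        rw [hbk k hki0, hbk i1 hi1i0]; abel
      rw [this]
      exact add_mem (mem_sup_left (sub_mem (subset_span ⟨i1, hi1, rfl⟩)
        (subset_span ⟨k, hk, rfl⟩))) (mem_sup_right (mem_span_singleton_self _))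
    refine ⟨finrank_inf_eq hxW hxU hWle (by omega) (by omega), ?_⟩
    refine inf_le_right.trans (span_mono (Set.image_mono ?_))
    intro k hk
    exact fun h => hi0 (h ▸ hk)

lemma key_nondeg {n : ℕ} [FiniteDimensional K E] (hdim : finrank K E = n + 1)
    (a b : Fin (n+1) → E) (v0 : E)
    (ha : LinearIndependent K a) (hb : LinearIndependent K b)
    (hrel : ∀ k, a k + b k = v0)
    (hface : ∀ j, span K (a '' {k | k ≠ j}) ≠ span K (b '' {k | k ≠ j})) :
    ∃ v : Submodule K E, finrank K v = n ∧
      ∀ S : Finset (Fin (n+1)), 1 ≤ S.card → S.card ≤ n →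
        finrank K ↥(span K (a '' ↑S) ⊓ span K (b '' ↑S)) = S.card - 1 ∧
        span K (a '' ↑S) ⊓ span K (b '' ↑S) ≤ v := by
  classical
  have hfaceset : ∀ j : Fin (n+1), {k | k ≠ j} = ↑(Finset.univ.erase j) := by
    intro j; ext k; simp
  have hfrank : ∀ (f : Fin (n+1) → E), LinearIndependent K f → ∀ j,
      finrank K ↥(span K (f '' {k | k ≠ j})) = n := by
    intro f hf j
    rw [hfaceset j, finrank_span_image_finset hf,
      Finset.card_erase_of_mem (Finset.mem_univ _)]
    simp
  have hbk : ∀ k, b k = v0 - a k := by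
    intro k; rw [eq_sub_iff_add_eq, add_comm]; exact hrel k
  -- v0 avoids the faces of a
  have hkeyface : ∀ j, v0 ∉ span K (a '' {k | k ≠ j}) := by
    intro j hmem
    have hle : span K (b '' {k | k ≠ j}) ≤ span K (a '' {k | k ≠ j}) := by
      rw [span_le]
      rintro x ⟨k, (hk : k ≠ j), rfl⟩
      rw [hbk k]
      exact sub_mem hmem (subset_span ⟨k, hk, rfl⟩)
    have heq := Submodule.eq_of_le_of_finrank_le hle
      (le_of_eq ((hfrank a ha j).trans (hfrank b hb j).symm))
    exact hface j heq.symm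
  have hkey : ∀ S : Finset (Fin (n+1)), S.card ≤ n → v0 ∉ span K (a '' ↑S) := by
    intro S hcard hmem
    obtain ⟨j, hj⟩ : ∃ j, j ∉ S := by
      by_contra h; push_neg at h
      rw [Finset.eq_univ_iff_forall.2 h, Finset.card_univ, Fintype.card_fin] at hcard
      omega
    exact hkeyface j (span_mono (Set.image_mono
      (fun k hk (hkj : k = j) => hj (hkj ▸ hk))) hmem)
  -- the basis made of the a's and the functional summing coordinates
  have hspan : span K (Set.range a) = ⊤ := by
    apply Submodule.eq_top_of_finrank_eq
    rw [hdim, finrank_span_eq_card ha, Fintype.card_fin]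
  let ba : Basis (Fin (n+1)) K E := Basis.mk ha (le_of_eq hspan.symm)
  have hba : ∀ i, ba i = a i := fun i => by simp [ba]
  let φ : E →ₗ[K] K := ba.constr ℕ (fun _ => (1 : K))
  have hφa : ∀ i, φ (a i) = 1 := by
    intro i
    rw [← hba i]
    exact Basis.constr_basis ba ℕ _ i
  have hφrange : LinearMap.range φ = ⊤ := by
    rw [LinearMap.range_eq_top]
    intro c
    exact ⟨c • a 0, by rw [map_smul, hφa 0, smul_eq_mul, mul_one]⟩
  have hφker : finrank K ↥(LinearMap.ker φ) = n := by
    have := LinearMap.finrank_range_add_finrank_ker φ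
    rw [hφrange, finrank_top, hdim, Module.finrank_self] at this
    omega
  refine ⟨LinearMap.ker φ, hφker, ?_⟩
  intro S h1 hn
  set U := span K (a '' ↑S) with hU
  set W := span K (b '' ↑S) with hW
  have hUr : finrank K ↥U = S.card := finrank_span_image_finset ha S
  have hWr : finrank K ↥W = S.card := finrank_span_image_finset hb S
  obtain ⟨i1, hi1⟩ := Finset.card_pos.1 (by omega : 0 < S.card)
  have hv0U : v0 ∉ U := hkey S hn
  have hxW : b i1 ∈ W := subset_span ⟨i1, hi1, rfl⟩
  have hxU : b i1 ∉ U := by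
    intro hmem
    apply hv0U
    have : v0 = b i1 + a i1 := by rw [hbk i1]; abel
    rw [this]
    exact add_mem hmem (subset_span ⟨i1, hi1, rfl⟩)
  have hWle : W ≤ U ⊔ (K ∙ b i1) := by
    rw [hW, span_le]
    rintro x ⟨k, hk, rfl⟩
    have : b k = (a i1 - a k) + b i1 := by rw [hbk k, hbk i1]; abel
    rw [this]
    exact add_mem (mem_sup_left (sub_mem (subset_span ⟨i1, hi1, rfl⟩)
      (subset_span ⟨k, hk, rfl⟩))) (mem_sup_right (mem_span_singleton_self _))
  refine ⟨finrank_inf_eq hxW hxU hWle (by omega) (by omega), ?_⟩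
  -- inclusion in the hyperplane ker φ
  rintro x ⟨hxU', hxW'⟩
  rw [hW, SetLike.mem_coe, Finsupp.mem_span_image_iff_linearCombination] at hxW'
  obtain ⟨m, hmsupp, rfl⟩ := hxW'
  rw [Finsupp.mem_supported] at hmsupp
  have hsum : Finsupp.linearCombination K b m = ∑ k ∈ S, m k • b k := by
    rw [Finsupp.linearCombination_apply, Finsupp.sum]
    exact Finset.sum_subset hmsupp (fun k _ hk => by
      rw [Finsupp.notMem_support_iff.1 hk, zero_smul])
  have hsum' : Finsupp.linearCombination K b m
      = (∑ k ∈ S, m k) • v0 - ∑ k ∈ S, m k • a k := by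
    rw [hsum, Finset.sum_smul, ← Finset.sum_sub_distrib]
    refine Finset.sum_congr rfl fun k _ => ?_
    rw [hbk k, smul_sub]
  have hstot : (∑ k ∈ S, m k) = 0 := by
    by_contra hs0
    apply hv0U
    have hmem : (∑ k ∈ S, m k) • v0 ∈ U := by
      have : (∑ k ∈ S, m k) • v0
          = Finsupp.linearCombination K b m + ∑ k ∈ S, m k • a k := by
        rw [hsum']; abel
      rw [this]
      exact add_mem hxU' (Submodule.sum_mem _ fun k hk =>
        smul_mem _ _ (subset_span ⟨k, hk, rfl⟩))
    have := U.smul_mem (∑ k ∈ S, m k)⁻¹ hmem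
    rwa [inv_smul_smul₀ hs0] at this
  rw [LinearMap.mem_ker, hsum, map_sum]
  have : ∀ k ∈ S, φ (m k • b k) = m k * (φ v0 - 1) := by
    intro k _
    rw [map_smul, hbk k, map_sub, hφa k, smul_eq_mul]
  rw [Finset.sum_congr rfl this, ← Finset.sum_mul, hstot, zero_mul]

end Helpers

/-- Extended Desargues theorem: two simplexes of projective `n`-space (over a
field with more than 2 elements) with no common point and no common face that
are in perspective from a point are in perspective from a hyperplane: there is
a hyperplane `v` such that for each `t = 1,…,n-1` the intersection of
corresponding `t`-spaces is a `(t-1)`-space (vector rank `t`) contained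
in `v`. -/
theorem perspective_point_to_hyperplane {K : Type*} [Field K]
    (hK : ∃ x : K, x ≠ 0 ∧ x ≠ 1) {n : ℕ}
    (A B : Fin (n+1) → ℙ K (Fin (n+1) → K)) (V : ℙ K (Fin (n+1) → K))
    (hA : pspan K (Set.range A) = ⊤) (hB : pspan K (Set.range B) = ⊤)
    (hpt : ∀ i j : Fin (n+1), A i ≠ B j)
    (hface : ∀ i j : Fin (n+1),
      pspan K (A '' {k | k ≠ i}) ≠ pspan K (B '' {k | k ≠ j}))
    (hV : ∀ i : Fin (n+1), V.submodule ≤ pspan K {A i, B i}) :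
    ∃ v : Submodule K (Fin (n+1) → K), Module.finrank K v = n ∧
      ∀ t : ℕ, 1 ≤ t → t ≤ n - 1 → ∀ S : Finset (Fin (n+1)), S.card = t + 1 →
        Module.finrank K ↥(pspan K (A '' ↑S) ⊓ pspan K (B '' ↑S)) = t ∧
        pspan K (A '' ↑S) ⊓ pspan K (B '' ↑S) ≤ v := by
  classical
  have hdim : finrank K (Fin (n+1) → K) = n + 1 := Module.finrank_fin_fun K
  have indep : ∀ f : Fin (n+1) → (Fin (n+1) → K),
      span K (Set.range f) = ⊤ → LinearIndependent K f := fun f hf =>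
    linearIndependent_of_top_le_span_of_card_eq_finrank (le_of_eq hf.symm)
      (by rw [Fintype.card_fin, hdim])
  have trans1 : ∀ (P : Fin (n+1) → ℙ K (Fin (n+1) → K)) (c : Fin (n+1) → K),
      (∀ i, c i ≠ 0) → ∀ u : Set (Fin (n+1)),
      span K ((fun i => c i • (P i).rep) '' u) = pspan K (P '' u) := by
    intro P c hc u
    rw [span_smul_image _ _ hc, pspan_image_s14]
  have htop : ∀ (P : Fin (n+1) → ℙ K (Fin (n+1) → K)), pspan K (Set.range P) = ⊤ →
      ∀ (c : Fin (n+1) → K), (∀ i, c i ≠ 0) →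
      LinearIndependent K (fun i => c i • (P i).rep) := by
    intro P hP c hc
    apply indep
    rw [← Set.image_univ, trans1 P c hc, Set.image_univ, hP]
  have hr : LinearIndependent K (fun i => (A i).rep) := by
    have := htop A hA (fun _ => 1) (fun _ => one_ne_zero)
    simpa using this
  have hs : LinearIndependent K (fun i => (B i).rep) := by
    have := htop B hB (fun _ => 1) (fun _ => one_ne_zero)
    simpa using this
  have hVrep : V.rep ≠ 0 := V.rep_nonzero
  have hVmem : ∀ i, ∃ c d : K, c • (A i).rep + d • (B i).rep = V.rep := by
    intro i
    have h1 : V.rep ∈ pspan K {A i, B i} := hV i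
      (by rw [Projectivization.submodule_eq]; exact mem_span_singleton_self _)
    have h2 : pspan K {A i, B i} = span K {(A i).rep, (B i).rep} := by
      rw [pspan, iSup_insert, iSup_singleton, Projectivization.submodule_eq,
        Projectivization.submodule_eq, Submodule.span_insert]
    rw [h2] at h1
    exact Submodule.mem_span_pair.1 h1
  choose α β hαβ using hVmem
  have hmkeq : ∀ (P Q : ℙ K (Fin (n+1) → K)) (c : K), c ≠ 0 → c • Q.rep = P.rep → P = Q := by
    intro P Q c hc h
    rw [← P.mk_rep, ← Q.mk_rep]
    exact (mk_eq_mk_iff' K _ _ P.rep_nonzero Q.rep_nonzero).2 ⟨c, h⟩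
  by_cases hndA : ∃ i, β i = 0
  · -- V is a vertex of A
    obtain ⟨i0, hβ0⟩ := hndA
    have hαi0 : α i0 ≠ 0 := by
      intro h; apply hVrep; rw [← hαβ i0, hβ0, h]; simp
    have hVA : V = A i0 := hmkeq V (A i0) (α i0) hαi0 (by rw [← hαβ i0, hβ0]; simp)
    have hβ : ∀ k, k ≠ i0 → β k ≠ 0 := by
      intro k hk h0
      have hαk : α k ≠ 0 := by
        intro h; apply hVrep; rw [← hαβ k, h0, h]; simp
      have hVAk : V = A k := hmkeq V (A k) (α k) hαk (by rw [← hαβ k, h0]; simp)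
      have hrepeq : (A k).rep = (A i0).rep := by rw [← hVAk, ← hVA]
      exact hk (hr.injective hrepeq)
    have hα : ∀ k, α k ≠ 0 := by
      intro k h0
      rcases eq_or_ne k i0 with rfl | hk
      · exact hαi0 h0
      · have hβk : β k ≠ 0 := by
          intro h; apply hVrep; rw [← hαβ k, h0, h]; simp
        have hVBk : V = B k := hmkeq V (B k) (β k) hβk (by rw [← hαβ k, h0]; simp)
        exact hpt i0 k (by rw [← hVA, ← hVBk])
    set a : Fin (n+1) → (Fin (n+1) → K) := fun i => α i • (A i).rep with ha_def
    set b : Fin (n+1) → (Fin (n+1) → K) :=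
      fun i => (if i = i0 then 1 else β i) • (B i).rep with hb_def
    have hbc : ∀ i, (if i = i0 then 1 else β i) ≠ 0 := by
      intro i; split_ifs with h
      · exact one_ne_zero
      · exact hβ i h
    have hspanA : ∀ u : Set (Fin (n+1)), span K (a '' u) = pspan K (A '' u) :=
      trans1 A α hα
    have hspanB : ∀ u : Set (Fin (n+1)), span K (b '' u) = pspan K (B '' u) :=
      trans1 B _ hbc
    have ha : LinearIndependent K a := htop A hA α hα
    have hb : LinearIndependent K b := htop B hB _ hbc
    have hrel : ∀ k, k ≠ i0 → a k + b k = a i0 := by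
      intro k hk
      show α k • (A k).rep + (if k = i0 then 1 else β k) • (B k).rep = α i0 • (A i0).rep
      rw [if_neg hk, hαβ k, ← hαβ i0, hβ0, zero_smul, add_zero]
    have hface' : ∀ j, span K (a '' {k | k ≠ j}) ≠ span K (b '' {k | k ≠ j}) := by
      intro j; rw [hspanA, hspanB]; exact hface j j
    obtain ⟨v, hv, hmain⟩ := key_deg hdim a b i0 ha hb hrel hface'
    refine ⟨v, hv, ?_⟩
    intro t ht1 ht2 S hS
    have := hmain S (by omega) (by omega)
    rw [← hspanA (↑S), ← hspanB (↑S)]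
    exact ⟨this.1.trans (by omega), this.2⟩
  · by_cases hndB : ∃ i, α i = 0
    · -- V is a vertex of B
      obtain ⟨i0, hα0⟩ := hndB
      push_neg at hndA
      have hVB : V = B i0 := hmkeq V (B i0) (β i0) (hndA i0)
        (by rw [← hαβ i0, hα0]; simp)
      have hα : ∀ k, k ≠ i0 → α k ≠ 0 := by
        intro k hk h0
        have hVBk : V = B k := hmkeq V (B k) (β k) (hndA k) (by rw [← hαβ k, h0]; simp)
        have hrepeq : (B k).rep = (B i0).rep := by rw [← hVBk, ← hVB]
        exact hk (hs.injective hrepeq)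
      have hac : ∀ i, (if i = i0 then 1 else α i) ≠ 0 := by
        intro i; split_ifs with h
        · exact one_ne_zero
        · exact hα i h
      set a : Fin (n+1) → (Fin (n+1) → K) :=
        fun i => (if i = i0 then 1 else α i) • (A i).rep with ha_def
      set b : Fin (n+1) → (Fin (n+1) → K) := fun i => β i • (B i).rep with hb_def
      have hspanA : ∀ u : Set (Fin (n+1)), span K (a '' u) = pspan K (A '' u) :=
        trans1 A _ hac
      have hspanB : ∀ u : Set (Fin (n+1)), span K (b '' u) = pspan K (B '' u) :=
        trans1 B β hndA
      have ha : LinearIndependent K a := htop A hA _ hac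
      have hb : LinearIndependent K b := htop B hB β hndA
      have hrel : ∀ k, k ≠ i0 → b k + a k = b i0 := by
        intro k hk
        show β k • (B k).rep + (if k = i0 then 1 else α k) • (A k).rep = β i0 • (B i0).rep
        have h2 : β i0 • (B i0).rep = V.rep := by rw [← hαβ i0, hα0, zero_smul, zero_add]
        rw [if_neg hk, h2, ← hαβ k]
        exact add_comm _ _
      have hface' : ∀ j, span K (b '' {k | k ≠ j}) ≠ span K (a '' {k | k ≠ j}) := by
        intro j; rw [hspanA, hspanB]; exact (hface j j).symm
      obtain ⟨v, hv, hmain⟩ := key_deg hdim b a i0 hb ha hrel hface'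
      refine ⟨v, hv, ?_⟩
      intro t ht1 ht2 S hS
      have := hmain S (by omega) (by omega)
      rw [inf_comm] at this
      rw [← hspanA (↑S), ← hspanB (↑S)]
      exact ⟨this.1.trans (by omega), this.2⟩
    · -- nondegenerate case
      push_neg at hndA hndB
      set a : Fin (n+1) → (Fin (n+1) → K) := fun i => α i • (A i).rep with ha_def
      set b : Fin (n+1) → (Fin (n+1) → K) := fun i => β i • (B i).rep with hb_def
      have hspanA : ∀ u : Set (Fin (n+1)), span K (a '' u) = pspan K (A '' u) :=
        trans1 A α hndB
      have hspanB : ∀ u : Set (Fin (n+1)), span K (b '' u) = pspan K (B '' u) :=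
        trans1 B β hndA
      have ha : LinearIndependent K a := htop A hA α hndB
      have hb : LinearIndependent K b := htop B hB β hndA
      have hface' : ∀ j, span K (a '' {k | k ≠ j}) ≠ span K (b '' {k | k ≠ j}) := by
        intro j; rw [hspanA, hspanB]; exact hface j j
      obtain ⟨v, hv, hmain⟩ := key_nondeg hdim a b V.rep ha hb hαβ hface'
      refine ⟨v, hv, ?_⟩
      intro t ht1 ht2 S hS
      have := hmain S (by omega) (by omega)
      rw [← hspanA (↑S), ← hspanB (↑S)]
      exact ⟨this.1.trans (by omega), this.2⟩
end

section
/- Let A, B be two simplexes in projective n-space with no common point and no common hyperplane (face). If A, B are in perspective from a hyperplane, then they are in perspective from a point. -/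
open scoped LinearAlgebra.Projectivization
open Projectivization

lemma pspan_pair_s15 {K : Type*} [Field K] {V : Type*} [AddCommGroup V] [Module K V]
    (x y : ℙ K V) : pspan K {x, y} = Submodule.span K {x.rep, y.rep} := by
  unfold pspan
  rw [iSup_pair, Projectivization.submodule_eq, Projectivization.submodule_eq,
    Submodule.span_insert]

lemma pspan_range {K : Type*} [Field K] {V : Type*} [AddCommGroup V] [Module K V]
    {ι : Type*} (f : ι → ℙ K V) :
    pspan K (Set.range f) = Submodule.span K (Set.range fun i => (f i).rep) := by
  unfold pspan
  rw [iSup_range, Submodule.span_range_eq_iSup]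
  simp only [Projectivization.submodule_eq]

set_option maxHeartbeats 1000000 in
/-- Converse of the extended Desargues theorem: two simplexes of projective
`n`-space with no common point and no common face which are in perspective
from a hyperplane are in perspective from a point. -/
theorem perspective_hyperplane_to_point {K : Type*} [Field K] {n : ℕ}
    (A B : Fin (n+1) → ℙ K (Fin (n+1) → K))
    (hA : pspan K (Set.range A) = ⊤) (hB : pspan K (Set.range B) = ⊤)
    (hpt : ∀ i j : Fin (n+1), A i ≠ B j)
    (hface : ∀ i j : Fin (n+1),
      pspan K (A '' {k | k ≠ i}) ≠ pspan K (B '' {k | k ≠ j}))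
    -- `A`, `B` are in perspective from a hyperplane `v`
    (hv : ∃ v : Submodule K (Fin (n+1) → K), Module.finrank K v = n ∧
      ∀ t : ℕ, 1 ≤ t → t ≤ n - 1 → ∀ S : Finset (Fin (n+1)), S.card = t + 1 →
        Module.finrank K ↥(pspan K (A '' ↑S) ⊓ pspan K (B '' ↑S)) = t ∧
        pspan K (A '' ↑S) ⊓ pspan K (B '' ↑S) ≤ v) :
    ∃ V : ℙ K (Fin (n+1) → K), ∀ i : Fin (n+1),
      V.submodule ≤ pspan K {A i, B i} := by
  classical
  have hdim : Module.finrank K (Fin (n+1) → K) = n + 1 := by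
    simp [Module.finrank_pi]
  -- the degenerate case n = 0 is contradictory
  rcases Nat.eq_zero_or_pos n with rfl | hnpos
  · exfalso
    have hsub : ∀ C : Fin 1 → ℙ K (Fin 1 → K), pspan K (Set.range C) = (C 0).submodule := by
      intro C
      unfold pspan
      rw [iSup_range]
      refine le_antisymm (iSup_le fun i => ?_) (le_iSup (fun i => (C i).submodule) 0)
      rw [Subsingleton.elim i 0]
    have h1 : (A 0).submodule = (B 0).submodule := by
      rw [← hsub A, ← hsub B, hA, hB]
    exact hpt 0 0 (Projectivization.submodule_injective h1)
  -- now `n ≥ 1`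
  obtain ⟨v, hvrank, hvmain⟩ := hv
  have hAspan : ⊤ ≤ Submodule.span K (Set.range fun i => (A i).rep) := by
    rw [← pspan_range A, hA]
  have hBspan : Submodule.span K (Set.range fun i => (B i).rep) = ⊤ := by
    rw [← pspan_range B, hB]
  have hcard : Fintype.card (Fin (n+1)) = Module.finrank K (Fin (n+1) → K) := by
    rw [hdim, Fintype.card_fin]
  let ba : Module.Basis (Fin (n+1)) K (Fin (n+1) → K) :=
    basisOfTopLeSpanOfCardEqFinrank (fun i => (A i).rep) hAspan hcard
  have hba : ∀ i, ba i = (A i).rep := fun i =>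
    congrFun (coe_basisOfTopLeSpanOfCardEqFinrank (fun i => (A i).rep) hAspan hcard) i
  set c : Fin (n+1) → Fin (n+1) → K := fun i k => ba.repr ((B i).rep) k with hc
  have hbne : ∀ i, (B i).rep ≠ 0 := fun i => (B i).rep_nonzero
  -- `B i` is never a multiple of `A i`
  have hrep : ∀ i : Fin (n+1), ¬ ∃ t : K, t • (A i).rep = (B i).rep := by
    rintro i ⟨t, ht⟩
    have ht0 : t ≠ 0 := by
      rintro rfl
      rw [zero_smul] at ht
      exact hbne i ht.symm
    apply hpt i i
    rw [← (A i).mk_rep, ← (B i).mk_rep]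
    exact (Projectivization.mk_eq_mk_iff' K _ _ (A i).rep_nonzero (B i).rep_nonzero).2
      ⟨t⁻¹, by rw [← ht, smul_smul, inv_mul_cancel₀ ht0, one_smul]⟩
  -- hence the coordinates of `B i` cannot be concentrated at `i`
  have hsupp : ∀ i : Fin (n+1), (∀ k, k ≠ i → c i k = 0) → False := by
    intro i h
    apply hrep i
    refine ⟨c i i, ?_⟩
    have hs := ba.sum_repr ((B i).rep)
    rw [Finset.sum_eq_single i
      (fun k _ hk => by rw [show ba.repr ((B i).rep) k = c i k from rfl, h k hk, zero_smul])
      (fun h => absurd (Finset.mem_univ i) h)] at hs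
    rw [← hba i]
    exact hs
  -- a linear functional vanishing on `v`
  have hvne : v ≠ ⊤ := by
    intro h
    rw [h, finrank_top, hdim] at hvrank
    omega
  have hq : Module.finrank K ((Fin (n+1) → K) ⧸ v) = 1 := by
    have h2 := Submodule.finrank_quotient_add_finrank v
    rw [hvrank, hdim] at h2
    omega
  let bq : Module.Basis (Fin 1) K ((Fin (n+1) → K) ⧸ v) := Module.finBasisOfFinrankEq K _ hq
  let φ : (Fin (n+1) → K) →ₗ[K] K := (bq.coord 0).comp v.mkQ
  have hφv : ∀ x ∈ v, φ x = 0 := by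
    intro x hx
    have h0 : v.mkQ x = 0 := by
      rw [Submodule.mkQ_apply]
      exact (Submodule.Quotient.mk_eq_zero v).2 hx
    show bq.coord 0 (v.mkQ x) = 0
    rw [h0, map_zero]
  have hcoord : ∀ y : (Fin (n+1) → K) ⧸ v, bq.coord 0 y = 0 → y = 0 := by
    intro y hy
    have hs := bq.sum_repr y
    rw [Fin.sum_univ_one] at hs
    rw [Module.Basis.coord_apply] at hy
    rw [← hs, hy, zero_smul]
  have hφm : ∃ m, φ ((B m).rep) ≠ 0 := by
    by_contra h
    push_neg at h
    have hble : Submodule.span K (Set.range fun i => (B i).rep) ≤ v := by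
      rw [Submodule.span_le]
      rintro x ⟨m, rfl⟩
      have h0 : v.mkQ ((B m).rep) = 0 := hcoord _ (h m)
      rw [Submodule.mkQ_apply] at h0
      exact (Submodule.Quotient.mk_eq_zero v).1 h0
    rw [hBspan] at hble
    exact hvne (top_le_iff.1 hble)
  -- identification of the pspans of pairs
  have himg : ∀ (C : Fin (n+1) → ℙ K (Fin (n+1) → K)) (i j : Fin (n+1)),
      pspan K (C '' ↑({i, j} : Finset (Fin (n+1))))
        = Submodule.span K {(C i).rep, (C j).rep} := by
    intro C i j
    have h1 : (↑({i, j} : Finset (Fin (n+1))) : Set (Fin (n+1))) = {i, j} := by simp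
    rw [h1, Set.image_pair, pspan_pair_s15]
  -- the key identity coming from perspectivity from the hyperplane `v`
  have key : 2 ≤ n → ∀ i j k : Fin (n+1), i ≠ j → k ≠ i → k ≠ j →
      φ ((B j).rep) * c i k = φ ((B i).rep) * c j k := by
    intro hn2 i j k hij hki hkj
    obtain ⟨hrank, hle⟩ := hvmain 1 le_rfl (by omega) {i, j} (by rw [Finset.card_pair hij])
    have hWne : pspan K (A '' ↑({i, j} : Finset (Fin (n+1))))
        ⊓ pspan K (B '' ↑({i, j} : Finset (Fin (n+1)))) ≠ ⊥ := by
      intro h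
      rw [h] at hrank
      simp at hrank
    obtain ⟨p, hp, hp0⟩ := (Submodule.ne_bot_iff _).1 hWne
    have hpv : p ∈ v := hle hp
    obtain ⟨hpA, hpB⟩ := Submodule.mem_inf.1 hp
    rw [himg A i j] at hpA
    rw [himg B i j] at hpB
    obtain ⟨z, w, hzw⟩ := Submodule.mem_span_pair.1 hpB
    obtain ⟨z', w', hzw'⟩ := Submodule.mem_span_pair.1 hpA
    have hrk : ba.repr p k = 0 := by
      rw [← hzw', ← hba i, ← hba j]
      rw [map_add, map_smul, map_smul, Module.Basis.repr_self, Module.Basis.repr_self]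
      rw [Finsupp.add_apply, Finsupp.smul_apply, Finsupp.smul_apply,
        Finsupp.single_eq_of_ne' (Ne.symm hki), Finsupp.single_eq_of_ne' (Ne.symm hkj)]
      simp
    have hck : z * c i k + w * c j k = 0 := by
      have h1 : ba.repr p k = z * c i k + w * c j k := by
        rw [← hzw, map_add, map_smul, map_smul, Finsupp.add_apply,
          Finsupp.smul_apply, Finsupp.smul_apply, smul_eq_mul, smul_eq_mul]
      rw [← h1, hrk]
    have hφp : z * φ ((B i).rep) + w * φ ((B j).rep) = 0 := by
      have h1 := hφv p hpv
      rw [← hzw, map_add, map_smul, map_smul, smul_eq_mul, smul_eq_mul] at h1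
      exact h1
    have hzw0 : z ≠ 0 ∨ w ≠ 0 := by
      by_contra h
      push_neg at h
      apply hp0
      rw [← hzw, h.1, h.2, zero_smul, zero_smul, add_zero]
    rcases hzw0 with hz | hw
    · apply mul_left_cancel₀ hz
      linear_combination φ ((B j).rep) * hck - c j k * hφp
    · apply mul_left_cancel₀ hw
      linear_combination c i k * hφp - φ ((B i).rep) * hck
  -- existence of suitable scaling factors μ
  have hmu : ∃ μ : Fin (n+1) → K, (∃ i, μ i ≠ 0) ∧
      ∀ i j k : Fin (n+1), i ≠ j → k ≠ i → k ≠ j → μ i * c i k = μ j * c j k := by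
    rcases lt_or_ge n 2 with hn1 | hn2
    · -- n = 1 : the compatibility conditions are vacuous
      refine ⟨fun _ => 1, ⟨0, one_ne_zero⟩, ?_⟩
      intro i j k hij hki hkj
      exfalso
      have h1 := i.isLt
      have h2 := j.isLt
      have h3 := k.isLt
      have e1 : i.val ≠ j.val := by simpa [Fin.ext_iff] using hij
      have e2 : k.val ≠ i.val := by simpa [Fin.ext_iff] using hki
      have e3 : k.val ≠ j.val := by simpa [Fin.ext_iff] using hkj
      omega
    · rcases Classical.em (∀ i, φ ((B i).rep) ≠ 0) with hall | hex
      · refine ⟨fun i => (φ ((B i).rep))⁻¹, ⟨0, inv_ne_zero (hall 0)⟩, ?_⟩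
        intro i j k hij hki hkj
        have hk := key hn2 i j k hij hki hkj
        rw [inv_mul_eq_div, inv_mul_eq_div, div_eq_div_iff (hall i) (hall j)]
        linear_combination hk
      · push_neg at hex
        obtain ⟨i0, hi0⟩ := hex
        obtain ⟨m, hm⟩ := hφm
        have hi0m : i0 ≠ m := fun h => hm (h ▸ hi0)
        have hzero : ∀ j, j ≠ m → φ ((B j).rep) = 0 := by
          intro j hjm
          by_contra hj
          have hi0j : i0 ≠ j := fun h => hj (h ▸ hi0)
          apply hsupp i0
          intro k hk
          by_cases hkm : k = m
          · have hkj : k ≠ j := by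
              rw [hkm]
              exact fun h => hjm h.symm
            have h1 := key hn2 i0 j k hi0j hk hkj
            rw [hi0, zero_mul] at h1
            exact (mul_eq_zero.1 h1).resolve_left hj
          · have h1 := key hn2 i0 m k hi0m hk hkm
            rw [hi0, zero_mul] at h1
            exact (mul_eq_zero.1 h1).resolve_left hm
        have hzero2 : ∀ i, i ≠ m → ∀ k, k ≠ i → k ≠ m → c i k = 0 := by
          intro i him k hki hkm
          have h1 := key hn2 i m k him hki hkm
          rw [hzero i him, zero_mul] at h1
          exact (mul_eq_zero.1 h1).resolve_left hm
        have hcm : ∀ i, i ≠ m → c i m ≠ 0 := by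
          intro i him hcc
          apply hsupp i
          intro k hk
          by_cases hkm : k = m
          · rwa [hkm]
          · exact hzero2 i him k hk hkm
        refine ⟨fun i => if i = m then 0 else (c i m)⁻¹,
          ⟨i0, by simp only [if_neg hi0m]; exact inv_ne_zero (hcm i0 hi0m)⟩, ?_⟩
        intro i j k hij hki hkj
        show (if i = m then (0:K) else (c i m)⁻¹) * c i k
          = (if j = m then (0:K) else (c j m)⁻¹) * c j k
        by_cases him : i = m
        · have hjm : j ≠ m := fun h => hij (him.trans h.symm)
          rw [him, if_pos rfl, zero_mul, if_neg hjm,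
            hzero2 j hjm k hkj (him ▸ hki), mul_zero]
        · by_cases hjm : j = m
          · rw [hjm, if_pos rfl, zero_mul, if_neg him,
              hzero2 i him k hki (hjm ▸ hkj), mul_zero]
          · rw [if_neg him, if_neg hjm]
            by_cases hkm : k = m
            · rw [hkm, inv_mul_cancel₀ (hcm i him), inv_mul_cancel₀ (hcm j hjm)]
            · rw [hzero2 i him k hki hkm, hzero2 j hjm k hkj hkm, mul_zero, mul_zero]
  -- construct the centre of perspectivity from μ
  obtain ⟨μ, ⟨iw, hiw⟩, hstar⟩ := hmu
  have h0 : (0:ℕ) < n + 1 := by omega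
  have h1 : (1:ℕ) < n + 1 := by omega
  obtain ⟨σ, hσ⟩ : ∃ σ : Fin (n+1) → Fin (n+1), ∀ k, σ k ≠ k := by
    refine ⟨fun k => if k = ⟨0, h0⟩ then ⟨1, h1⟩ else ⟨0, h0⟩, fun k => ?_⟩
    by_cases hk : k = ⟨0, h0⟩
    · simp only [if_pos hk, hk]
      simp [Fin.ext_iff]
    · simp only [if_neg hk]
      exact fun h => hk h.symm
  set wv : Fin (n+1) → K := ∑ k, (μ (σ k) * c (σ k) k) • ba k with hwv
  have hwr : ∀ k, ba.repr wv k = μ (σ k) * c (σ k) k := by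
    intro k
    rw [hwv]
    exact congrFun (ba.repr_sum_self (fun k => μ (σ k) * c (σ k) k)) k
  have hdecomp : ∀ i, ∃ t : K, wv = μ i • (B i).rep + t • (A i).rep := by
    intro i
    have hu : ∀ k, k ≠ i → ba.repr (wv - μ i • (B i).rep) k = 0 := by
      intro k hk
      rw [map_sub, map_smul, Finsupp.sub_apply, Finsupp.smul_apply, smul_eq_mul, hwr k]
      show μ (σ k) * c (σ k) k - μ i * c i k = 0
      by_cases hσk : σ k = i
      · rw [hσk, sub_self]
      · rw [hstar (σ k) i k hσk (Ne.symm (hσ k)) hk, sub_self]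
    have hsum := ba.sum_repr (wv - μ i • (B i).rep)
    rw [Finset.sum_eq_single i
      (fun k _ hk => by rw [hu k hk, zero_smul])
      (fun h => absurd (Finset.mem_univ i) h)] at hsum
    rw [hba i] at hsum
    exact ⟨ba.repr (wv - μ i • (B i).rep) i, sub_eq_iff_eq_add'.1 hsum.symm⟩
  have hwne : wv ≠ 0 := by
    intro h
    obtain ⟨t, ht⟩ := hdecomp iw
    rw [h] at ht
    apply hrep iw
    refine ⟨(μ iw)⁻¹ * (-t), ?_⟩
    have h2 : μ iw • (B iw).rep = -(t • (A iw).rep) :=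
      eq_neg_of_add_eq_zero_left ht.symm
    rw [mul_smul, neg_smul, ← h2, smul_smul, inv_mul_cancel₀ hiw, one_smul]
  refine ⟨Projectivization.mk K wv hwne, ?_⟩
  intro i
  rw [Projectivization.submodule_mk, pspan_pair_s15]
  rw [Submodule.span_singleton_le_iff_mem]
  obtain ⟨t, ht⟩ := hdecomp i
  rw [ht]
  exact Submodule.add_mem _
    (Submodule.smul_mem _ _ (Submodule.subset_span (Set.mem_insert_of_mem _ rfl)))
    (Submodule.smul_mem _ _ (Submodule.subset_span (Set.mem_insert _ _)))
end
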